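/- Let B(R₁,R₂) = (1/2)(Q(R₁+R₂) − Q(R₁) − Q(R₂)) be the polarization of Q(R) = R² + R^#. If W is a Weyl curvature operator (i.e., W ∈ S²_B Λ²ℝⁿ with vanishing Ricci tensor), then B(W, Id) = 0. -/

import Mathlib

open Matrix

noncomputable section

/-! Model of Λ²ℝⁿ as the space of skew-symmetric n×n real matrices, via the
identification x∧y ↦ (u ↦ ⟨x,u⟩y - ⟨y,u⟩x), with inner product
⟨x∧y, z∧t⟩ = ⟨x,z⟩⟨y,t⟩ - ⟨x,t⟩⟨y,z⟩, i.e. ⟨A,B⟩ = (1/2) tr(AᵀB). -/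

/-- Λ²ℝⁿ, modelled as skew-symmetric matrices. -/
def sk (n : ℕ) : Submodule ℝ (Matrix (Fin n) (Fin n) ℝ) where
  carrier := {A | Aᵀ = -A}
  add_mem' := by
    intro a b ha hb
    simp only [Set.mem_setOf_eq] at *
    rw [Matrix.transpose_add, ha, hb, neg_add]
  zero_mem' := by simp
  smul_mem' := by
    intro c a ha
    simp only [Set.mem_setOf_eq] at *
    rw [Matrix.transpose_smul, ha, smul_neg]

theorem sk_mem {n : ℕ} {A : Matrix (Fin n) (Fin n) ℝ} : A ∈ sk n ↔ Aᵀ = -A := Iff.rfl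

/-- The inner product on Λ²ℝⁿ induced by the standard one on ℝⁿ. -/
def ip {n : ℕ} (A B : sk n) : ℝ := (∑ i, ∑ j, A.1 i j * B.1 i j) / 2

/-- The wedge product x∧y of two vectors of ℝⁿ, as an element of Λ²ℝⁿ. -/
def wedge {n : ℕ} (x y : Fin n → ℝ) : sk n :=
  ⟨Matrix.of fun i j => x i * y j - x j * y i, by
    rw [sk_mem]
    ext i j
    simp only [Matrix.transpose_apply, Matrix.of_apply, Matrix.neg_apply]
    ring⟩

/-- The Lie bracket on Λ²ℝⁿ ≅ so(n). -/
def br {n : ℕ} (A B : sk n) : sk n :=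
  ⟨A.1 * B.1 - B.1 * A.1, by
    have hA := A.2
    have hB := B.2
    rw [sk_mem] at *
    rw [Matrix.transpose_sub, Matrix.transpose_mul, Matrix.transpose_mul, hA, hB]
    simp only [Matrix.neg_mul, Matrix.mul_neg, neg_neg, neg_sub]⟩

/-- The i-th standard basis vector of ℝⁿ. -/
def stdVec (n : ℕ) (i : Fin n) : Fin n → ℝ := Pi.single i 1

/-- A symmetric endomorphism of Λ²ℝⁿ. -/
def IsSym {n : ℕ} (R : sk n →ₗ[ℝ] sk n) : Prop := ∀ A B, ip (R A) B = ip A (R B)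

/-- The first Bianchi identity. -/
def Bianchi {n : ℕ} (R : sk n →ₗ[ℝ] sk n) : Prop :=
  ∀ x y z t : Fin n → ℝ,
    ip (R (wedge x y)) (wedge z t) + ip (R (wedge z x)) (wedge y t)
      + ip (R (wedge y z)) (wedge x t) = 0

/-- The quadratic form η ↦ ⟨R^# η, η⟩ = -(1/2) ∑ᵢ ⟨[η, R([η, R(ωᵢ)])], ωᵢ⟩,
summed over the orthonormal basis (ωᵢⱼ = eᵢ∧eⱼ)_{i<j} of Λ²ℝⁿ. -/
def sharpForm {n : ℕ} (R : sk n →ₗ[ℝ] sk n) (η : sk n) : ℝ :=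
  -(1 / 2) * ∑ i, ∑ j,
    if i < j then
      ip (br η (R (br η (R (wedge (stdVec n i) (stdVec n j))))))
        (wedge (stdVec n i) (stdVec n j))
    else 0

/-- `S` is the sharp R^# of `R`: the symmetric operator whose quadratic form is
`sharpForm R`. -/
def IsSharp {n : ℕ} (R S : sk n →ₗ[ℝ] sk n) : Prop :=
  IsSym S ∧ ∀ η, ip (S η) η = sharpForm R η

/-- The Ricci tensor of a curvature operator. -/
def ric {n : ℕ} (R : sk n →ₗ[ℝ] sk n) (x y : Fin n → ℝ) : ℝ :=
  ∑ i, ip (R (wedge x (stdVec n i))) (wedge y (stdVec n i))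

/-- The inner product on endomorphisms of Λ²ℝⁿ induced by that of Λ²ℝⁿ. -/
def opIp {n : ℕ} (R S : sk n →ₗ[ℝ] sk n) : ℝ :=
  ∑ i, ∑ j,
    if i < j then
      ip (R (wedge (stdVec n i) (stdVec n j))) (S (wedge (stdVec n i) (stdVec n j)))
    else 0

section Lemmas
variable {n : ℕ}

lemma sk_coe_add (A B : sk n) : ((A + B : sk n) : Matrix (Fin n) (Fin n) ℝ) = A.1 + B.1 := rfl
lemma sk_coe_smul (c : ℝ) (A : sk n) : ((c • A : sk n) : Matrix (Fin n) (Fin n) ℝ) = c • A.1 := rfl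

lemma ip_comm (A B : sk n) : ip A B = ip B A := by
  unfold ip; congr 1; apply Finset.sum_congr rfl; intros; apply Finset.sum_congr rfl; intros
  ring

lemma ip_add_left (A B C : sk n) : ip (A + B) C = ip A C + ip B C := by
  unfold ip
  rw [← add_div]; congr 1
  rw [← Finset.sum_add_distrib]
  apply Finset.sum_congr rfl; intros
  rw [← Finset.sum_add_distrib]
  apply Finset.sum_congr rfl; intros
  simp [sk_coe_add, Matrix.add_apply, add_mul]

lemma ip_smul_left (c : ℝ) (A B : sk n) : ip (c • A) B = c * ip A B := by
  unfold ip
  rw [← mul_div_assoc]; congr 1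
  rw [Finset.mul_sum]
  apply Finset.sum_congr rfl; intros
  rw [Finset.mul_sum]
  apply Finset.sum_congr rfl; intros
  simp [sk_coe_smul, Matrix.smul_apply]; ring

def ipL : sk n →ₗ[ℝ] sk n →ₗ[ℝ] ℝ :=
  LinearMap.mk₂ ℝ ip ip_add_left (fun c A B => by rw [ip_smul_left, smul_eq_mul])
    (fun A B C => by rw [ip_comm, ip_add_left, ip_comm A B, ip_comm A C])
    (fun c A B => by rw [ip_comm, ip_smul_left, ip_comm, smul_eq_mul])

lemma ip_eq (A B : sk n) : ip A B = ipL A B := rfl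

lemma wedge_swap (x y : Fin n → ℝ) : wedge y x = - wedge x y := by
  apply Subtype.ext
  ext i j
  simp [wedge]
  ring

lemma wedge_self (x : Fin n → ℝ) : wedge x x = 0 := by
  apply Subtype.ext
  ext i j
  simp [wedge]
  ring

def brL (η : sk n) : sk n →ₗ[ℝ] sk n where
  toFun := br η
  map_add' A B := by
    apply Subtype.ext
    show η.1 * (A.1 + B.1) - (A.1 + B.1) * η.1 = (η.1 * A.1 - A.1 * η.1) + (η.1 * B.1 - B.1 * η.1)
    noncomm_ring
  map_smul' c A := by
    apply Subtype.ext
    show η.1 * (c • A.1) - (c • A.1) * η.1 = c • (η.1 * A.1 - A.1 * η.1)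
    simp [Matrix.mul_smul, Matrix.smul_mul, smul_sub]

lemma brL_apply (η A : sk n) : brL η A = br η A := rfl

end Lemmas
section Lemmas2
variable {n : ℕ}

lemma ip_sum_left {ι : Type*} (s : Finset ι) (f : ι → sk n) (B : sk n) :
    ip (∑ i ∈ s, f i) B = ∑ i ∈ s, ip (f i) B := by
  simp [ip_eq, map_sum, LinearMap.sum_apply]

lemma ip_sum_right {ι : Type*} (s : Finset ι) (A : sk n) (f : ι → sk n) :
    ip A (∑ i ∈ s, f i) = ∑ i ∈ s, ip A (f i) := by
  simp [ip_eq, map_sum]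

lemma sk_apply_symm (η : sk n) (i j : Fin n) : η.1 j i = - η.1 i j := by
  have h := η.2
  rw [sk_mem] at h
  have := congrFun (congrFun h i) j
  simpa [Matrix.transpose_apply] using this

lemma sum3_swap13 (f : Fin n → Fin n → Fin n → ℝ) :
    (∑ i, ∑ j, ∑ k, f i j k) = ∑ i, ∑ j, ∑ k, f k j i := by
  rw [show (∑ i, ∑ j, ∑ k, f i j k) = ∑ i, ∑ k, ∑ j, f i j k from
    Finset.sum_congr rfl fun i _ => Finset.sum_comm]
  rw [Finset.sum_comm]
  exact Finset.sum_congr rfl fun k _ => Finset.sum_comm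

lemma sum3_swap23 (f : Fin n → Fin n → Fin n → ℝ) :
    (∑ i, ∑ j, ∑ k, f i j k) = ∑ i, ∑ j, ∑ k, f i k j :=
  Finset.sum_congr rfl fun i _ => Finset.sum_comm

lemma ip_br (η A B : sk n) : ip (br η A) B = - ip A (br η B) := by
  unfold ip br
  rw [← neg_div]
  congr 1
  have h1 : (∑ i, ∑ j, ((η.1 * A.1 - A.1 * η.1) i j * B.1 i j))
      = (∑ i, ∑ j, ∑ k, (η.1 i k * A.1 k j * B.1 i j))
        - ∑ i, ∑ j, ∑ k, (A.1 i k * η.1 k j * B.1 i j) := by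
    rw [← Finset.sum_sub_distrib]
    apply Finset.sum_congr rfl; intro i _
    rw [← Finset.sum_sub_distrib]
    apply Finset.sum_congr rfl; intro j _
    rw [← Finset.sum_sub_distrib]
    simp [Matrix.sub_apply, Matrix.mul_apply, sub_mul, Finset.sum_mul]
  have h2 : (∑ i, ∑ j, (A.1 i j * (η.1 * B.1 - B.1 * η.1) i j))
      = (∑ i, ∑ j, ∑ k, (A.1 i j * η.1 i k * B.1 k j))
        - ∑ i, ∑ j, ∑ k, (A.1 i j * B.1 i k * η.1 k j) := by
    rw [← Finset.sum_sub_distrib]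
    apply Finset.sum_congr rfl; intro i _
    rw [← Finset.sum_sub_distrib]
    apply Finset.sum_congr rfl; intro j _
    rw [← Finset.sum_sub_distrib]
    simp [Matrix.sub_apply, Matrix.mul_apply, mul_sub, Finset.mul_sum, mul_assoc]
  rw [h1, h2]
  have e1 : (∑ i, ∑ j, ∑ k, (η.1 i k * A.1 k j * B.1 i j))
      = - ∑ i, ∑ j, ∑ k, (A.1 i j * η.1 i k * B.1 k j) := by
    rw [sum3_swap13]
    rw [← Finset.sum_neg_distrib]
    apply Finset.sum_congr rfl; intro i _
    rw [← Finset.sum_neg_distrib]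
    apply Finset.sum_congr rfl; intro j _
    rw [← Finset.sum_neg_distrib]
    apply Finset.sum_congr rfl; intro k _
    rw [sk_apply_symm η]
    ring
  have e2 : (∑ i, ∑ j, ∑ k, (A.1 i k * η.1 k j * B.1 i j))
      = - ∑ i, ∑ j, ∑ k, (A.1 i j * B.1 i k * η.1 k j) := by
    rw [sum3_swap23]
    rw [← Finset.sum_neg_distrib]
    apply Finset.sum_congr rfl; intro i _
    rw [← Finset.sum_neg_distrib]
    apply Finset.sum_congr rfl; intro j _
    rw [← Finset.sum_neg_distrib]
    apply Finset.sum_congr rfl; intro k _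
    rw [sk_apply_symm η k j]
    ring
  rw [e1, e2]
  ring

end Lemmas2
section Lemmas3
variable {n : ℕ}

lemma sk_coe_sum {ι : Type*} (s : Finset ι) (f : ι → sk n) :
    ((∑ i ∈ s, f i : sk n) : Matrix (Fin n) (Fin n) ℝ)
      = ∑ i ∈ s, (f i : Matrix (Fin n) (Fin n) ℝ) := by
  exact_mod_cast rfl

lemma mulw (η : sk n) (i j c d : Fin n) :
    (η.1 * (wedge (stdVec n i) (stdVec n j)).1) c d
      = η.1 c i * (Pi.single j 1 : Fin n → ℝ) d - η.1 c j * (Pi.single i 1 : Fin n → ℝ) d := by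
  rw [Matrix.mul_apply]
  simp [wedge, stdVec, Pi.single_apply, mul_sub, sub_mul, mul_ite, ite_mul,
    Finset.sum_sub_distrib, Finset.sum_ite_eq, Finset.sum_ite_eq']

lemma wmul (η : sk n) (i j c d : Fin n) :
    ((wedge (stdVec n i) (stdVec n j)).1 * η.1) c d
      = (Pi.single i 1 : Fin n → ℝ) c * η.1 j d - (Pi.single j 1 : Fin n → ℝ) c * η.1 i d := by
  rw [Matrix.mul_apply]
  simp [wedge, stdVec, Pi.single_apply, mul_sub, sub_mul, mul_ite, ite_mul,
    Finset.sum_sub_distrib, Finset.sum_ite_eq, Finset.sum_ite_eq']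

lemma br_wedge (η : sk n) (i j : Fin n) :
    br η (wedge (stdVec n i) (stdVec n j))
      = (∑ a, η.1 a i • wedge (stdVec n a) (stdVec n j))
        + ∑ b, η.1 b j • wedge (stdVec n i) (stdVec n b) := by
  apply Subtype.ext
  rw [sk_coe_add, sk_coe_sum, sk_coe_sum]
  ext c d
  show (η.1 * (wedge (stdVec n i) (stdVec n j)).1
      - (wedge (stdVec n i) (stdVec n j)).1 * η.1) c d = _
  rw [Matrix.sub_apply, mulw, wmul]
  simp only [Matrix.add_apply, Matrix.sum_apply, sk_coe_smul, Matrix.smul_apply, wedge,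
    stdVec, Matrix.of_apply, smul_eq_mul, Pi.single_apply, mul_sub, mul_ite, ite_mul,
    mul_one, mul_zero, zero_mul, one_mul, Finset.sum_sub_distrib, Finset.sum_ite_eq,
    Finset.sum_ite_eq', Finset.mem_univ, if_true, Finset.sum_ite_irrel, Finset.sum_const_zero]
  rw [sk_apply_symm η j d, sk_apply_symm η i d]
  split_ifs <;> ring

lemma sk_expand (A : sk n) :
    A = (2⁻¹ : ℝ) • ∑ i, ∑ j, A.1 i j • wedge (stdVec n i) (stdVec n j) := by
  apply Subtype.ext
  rw [sk_coe_smul, sk_coe_sum]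
  ext c d
  simp only [Matrix.smul_apply, Matrix.sum_apply, sk_coe_sum, sk_coe_smul, wedge, stdVec,
    Matrix.of_apply, Pi.single_apply, smul_eq_mul, mul_ite, ite_mul, one_mul, mul_one,
    zero_mul, mul_zero, mul_sub, Finset.sum_sub_distrib, Finset.sum_ite_irrel,
    Finset.sum_const_zero, Finset.sum_ite_eq, Finset.sum_ite_eq', Finset.mem_univ, if_true]
  rw [sk_apply_symm A d c]
  ring

lemma ip_self_nonneg (A : sk n) : 0 ≤ ip A A := by
  unfold ip
  apply div_nonneg _ (by norm_num)
  apply Finset.sum_nonneg; intro i _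
  apply Finset.sum_nonneg; intro j _
  exact mul_self_nonneg _

lemma ip_self_eq_zero (A : sk n) (h : ip A A = 0) : A = 0 := by
  unfold ip at h
  rw [div_eq_zero_iff] at h
  rcases h with h | h
  · apply Subtype.ext
    ext i j
    have h1 : ∀ i ∈ Finset.univ, (0:ℝ) ≤ ∑ j, A.1 i j * A.1 i j :=
      fun i _ => Finset.sum_nonneg fun j _ => mul_self_nonneg _
    have h2 := (Finset.sum_eq_zero_iff_of_nonneg h1).mp h i (Finset.mem_univ i)
    have h3 : ∀ j ∈ Finset.univ, (0:ℝ) ≤ A.1 i j * A.1 i j := fun j _ => mul_self_nonneg _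
    have h4 := (Finset.sum_eq_zero_iff_of_nonneg h3).mp h2 j (Finset.mem_univ j)
    have h5 : A.1 i j = 0 := by nlinarith
    simpa using h5
  · norm_num at h

end Lemmas3
section Lemmas4
variable {n : ℕ}

lemma ip_smul_right (c : ℝ) (A B : sk n) : ip A (c • B) = c * ip A B := by
  rw [ip_comm, ip_smul_left, ip_comm]

lemma ip_add_right (A B C : sk n) : ip A (B + C) = ip A B + ip A C := by
  rw [ip_comm, ip_add_left, ip_comm A B, ip_comm A C]

lemma ip_neg_left (A B : sk n) : ip (-A) B = -ip A B := by
  have h := ip_smul_left (-1 : ℝ) A B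
  rw [show (-1 : ℝ) • A = -A from neg_one_smul ℝ A] at h
  rw [h]; ring

lemma ip_sub_left (A B C : sk n) : ip (A - B) C = ip A C - ip B C := by
  rw [sub_eq_add_neg, ip_add_left, ip_neg_left]; ring

lemma ip_neg_right (A B : sk n) : ip A (-B) = -ip A B := by
  rw [ip_comm, ip_neg_left, ip_comm]

lemma ip_zero_left (B : sk n) : ip 0 B = 0 := by
  have := ip_smul_left (0 : ℝ) 0 B
  simpa using this

lemma ip_zero_right (A : sk n) : ip A 0 = 0 := by rw [ip_comm, ip_zero_left]

lemma br_add (η A B : sk n) : br η (A + B) = br η A + br η B := (brL η).map_add A B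

lemma br_neg (η A : sk n) : br η (-A) = -br η A := map_neg (brL η) A

lemma br_zero (η : sk n) : br η 0 = 0 := map_zero (brL η)

lemma br_sum {ι : Type*} (η : sk n) (s : Finset ι) (f : ι → sk n) :
    br η (∑ i ∈ s, f i) = ∑ i ∈ s, br η (f i) := map_sum (brL η) f s

lemma br_smul (η : sk n) (c : ℝ) (A : sk n) : br η (c • A) = c • br η A := map_smul (brL η) c A

lemma eq_zero_of_sym_quad (T : sk n →ₗ[ℝ] sk n) (hsym : IsSym T)
    (h : ∀ η, ip (T η) η = 0) : T = 0 := by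
  ext η
  have key : ip (T η) (T η) = 0 := by
    have h1 := h (η + T η)
    rw [map_add, ip_add_left, ip_add_right, ip_add_right] at h1
    have h2 : ip (T (T η)) η = ip (T η) (T η) := by
      rw [hsym (T η) η, ip_comm]
    have h3 := h η
    have h4 := h (T η)
    rw [h2] at h1
    linarith [h1, h3, h4]
  rw [ip_self_eq_zero _ key]
  rfl

lemma isSym_id : IsSym (LinearMap.id : sk n →ₗ[ℝ] sk n) := fun A B => rfl

lemma isSym_add {S T : sk n →ₗ[ℝ] sk n} (hS : IsSym S) (hT : IsSym T) : IsSym (S + T) := by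
  intro A B
  simp only [LinearMap.add_apply, ip_add_left, ip_add_right, hS A B, hT A B]

lemma isSym_sub {S T : sk n →ₗ[ℝ] sk n} (hS : IsSym S) (hT : IsSym T) : IsSym (S - T) := by
  intro A B
  simp only [LinearMap.sub_apply, ip_sub_left]
  rw [ip_comm A (S B - T B), ip_sub_left, ip_comm (S B) A, ip_comm (T B) A, hS A B, hT A B]

lemma isSym_smul (c : ℝ) {T : sk n →ₗ[ℝ] sk n} (hT : IsSym T) : IsSym (c • T) := by
  intro A B
  simp only [LinearMap.smul_apply, ip_smul_left, ip_smul_right, hT A B]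

lemma isSym_compSelf {T : sk n →ₗ[ℝ] sk n} (hT : IsSym T) : IsSym (T ∘ₗ T) := by
  intro A B
  simp only [LinearMap.comp_apply]
  rw [hT (T A) B, hT A (T B)]

lemma half_sum (f : Fin n → Fin n → ℝ) (hsymm : ∀ i j, f j i = f i j) (hdiag : ∀ i, f i i = 0) :
    ∑ i, ∑ j, (if i < j then f i j else 0) = 2⁻¹ * ∑ i, ∑ j, f i j := by
  have key : ∑ i, ∑ j, f i j
      = ∑ i, ∑ j, ((if i < j then f i j else 0) + (if j < i then f i j else 0)) := by
    apply Finset.sum_congr rfl; intro i _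
    apply Finset.sum_congr rfl; intro j _
    rcases lt_trichotomy i j with h | h | h
    · rw [if_pos h, if_neg (not_lt_of_gt h), add_zero]
    · subst h; simp [hdiag i]
    · rw [if_neg (not_lt_of_gt h), if_pos h, zero_add]
  have e2 : ∑ i, ∑ j, (if j < i then f i j else 0)
      = ∑ i, ∑ j, (if i < j then f i j else 0) := by
    rw [Finset.sum_comm]
    apply Finset.sum_congr rfl; intro i _
    apply Finset.sum_congr rfl; intro j _
    rw [hsymm i j]
  rw [key] at *
  simp only [Finset.sum_add_distrib] at *
  rw [e2]
  ring

lemma sum3_rot (f : Fin n → Fin n → Fin n → ℝ) :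
    ∑ i, ∑ j, ∑ k, f i j k = ∑ j, ∑ k, ∑ i, f i j k := by
  rw [Finset.sum_comm]
  exact Finset.sum_congr rfl fun j _ => Finset.sum_comm

lemma sum4_swap12 (f : Fin n → Fin n → Fin n → Fin n → ℝ) :
    ∑ i, ∑ j, ∑ a, ∑ c, f i j a c = ∑ j, ∑ i, ∑ a, ∑ c, f i j a c := Finset.sum_comm

lemma sum4_swap23 (f : Fin n → Fin n → Fin n → Fin n → ℝ) :
    ∑ i, ∑ j, ∑ a, ∑ c, f i j a c = ∑ i, ∑ a, ∑ j, ∑ c, f i j a c :=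
  Finset.sum_congr rfl fun _ _ => Finset.sum_comm

lemma sum4_swap34 (f : Fin n → Fin n → Fin n → Fin n → ℝ) :
    ∑ i, ∑ j, ∑ a, ∑ c, f i j a c = ∑ i, ∑ j, ∑ c, ∑ a, f i j a c :=
  Finset.sum_congr rfl fun _ _ => Finset.sum_congr rfl fun _ _ => Finset.sum_comm

end Lemmas4
section Lemmas5
variable {n : ℕ}

/-- Curvature components in the standard basis. -/
def R4 (W : sk n →ₗ[ℝ] sk n) (i j k l : Fin n) : ℝ :=
  ip (W (wedge (stdVec n i) (stdVec n j))) (wedge (stdVec n k) (stdVec n l))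

lemma R4_flip1 (W : sk n →ₗ[ℝ] sk n) (i j k l : Fin n) : R4 W j i k l = - R4 W i j k l := by
  unfold R4
  rw [wedge_swap, map_neg, ip_neg_left]

lemma R4_flip2 (W : sk n →ₗ[ℝ] sk n) (i j k l : Fin n) : R4 W i j l k = - R4 W i j k l := by
  unfold R4
  rw [wedge_swap (stdVec n k), ip_neg_right]

lemma R4_sym {W : sk n →ₗ[ℝ] sk n} (hW : IsSym W) (i j k l : Fin n) :
    R4 W i j k l = R4 W k l i j := by
  unfold R4
  rw [hW, ip_comm]

lemma R4_ric {W : sk n →ₗ[ℝ] sk n} (hric : ∀ x y : Fin n → ℝ, ric W x y = 0) (a c : Fin n) :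
    ∑ j, R4 W a j c j = 0 := hric (stdVec n a) (stdVec n c)

lemma R4_bianchi {W : sk n →ₗ[ℝ] sk n} (hb : Bianchi W) (a j i c : Fin n) :
    R4 W a j i c + R4 W i a j c + R4 W j i a c = 0 := hb _ _ _ _

/-- Expansion of `ip (W A) B` in components. -/
lemma ipW_expand (W : sk n →ₗ[ℝ] sk n) (A B : sk n) :
    ip (W A) B = 4⁻¹ * ∑ a, ∑ i, ∑ c, ∑ j, A.1 a i * B.1 c j * R4 W a i c j := by
  conv_lhs => rw [sk_expand A, sk_expand B]
  rw [_root_.map_smul, ip_smul_left, ip_smul_right]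
  rw [map_sum, ip_sum_left]
  simp only [map_sum, _root_.map_smul, ip_sum_left, ip_sum_right, ip_smul_left, ip_smul_right]
  have key : ∀ a : Fin n,
      (∑ c, ∑ j, B.1 c j * ∑ i, A.1 a i *
          ip (W (wedge (stdVec n a) (stdVec n i))) (wedge (stdVec n c) (stdVec n j)))
        = ∑ i, ∑ c, ∑ j, A.1 a i * B.1 c j * R4 W a i c j := by
    intro a
    have h1 : (∑ c, ∑ j, B.1 c j * ∑ i, A.1 a i *
          ip (W (wedge (stdVec n a) (stdVec n i))) (wedge (stdVec n c) (stdVec n j)))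
        = ∑ c, ∑ j, ∑ i, B.1 c j * (A.1 a i *
          ip (W (wedge (stdVec n a) (stdVec n i))) (wedge (stdVec n c) (stdVec n j))) := by
      apply Finset.sum_congr rfl; intro c _
      apply Finset.sum_congr rfl; intro j _
      rw [Finset.mul_sum]
    rw [h1, sum3_rot, sum3_rot]
    apply Finset.sum_congr rfl; intro i _
    apply Finset.sum_congr rfl; intro c _
    apply Finset.sum_congr rfl; intro j _
    unfold R4
    ring
  simp only [key]
  ring

end Lemmas5
section Lemmas5b
variable {n : ℕ}

lemma A_expand (W : sk n →ₗ[ℝ] sk n) (η : sk n) (i j : Fin n) :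
    ip (br η (W (br η (wedge (stdVec n i) (stdVec n j))))) (wedge (stdVec n i) (stdVec n j))
      = -( (∑ a, ∑ c, η.1 a i * η.1 c i * R4 W a j c j)
        + (∑ a, ∑ c, η.1 a i * η.1 c j * R4 W a j i c)
        + (∑ a, ∑ c, η.1 a j * η.1 c i * R4 W i a c j)
        + (∑ a, ∑ c, η.1 a j * η.1 c j * R4 W i a i c) ) := by
  rw [ip_br]
  rw [br_wedge η i j, map_add, map_sum, map_sum]
  simp only [_root_.map_smul, ip_add_left, ip_add_right, ip_sum_left, ip_sum_right,
    ip_smul_left, ip_smul_right, Finset.mul_sum, mul_add, Finset.sum_add_distrib]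
  have e1 : ∑ x : Fin n, ∑ c : Fin n, η.1 x i *
        (η.1 c i * ip (W (wedge (stdVec n c) (stdVec n j))) (wedge (stdVec n x) (stdVec n j)))
      = ∑ a, ∑ c, η.1 a i * η.1 c i * R4 W a j c j := by
    rw [Finset.sum_comm]
    apply Finset.sum_congr rfl; intro a _
    apply Finset.sum_congr rfl; intro c _
    unfold R4; ring
  have e2 : ∑ x : Fin n, ∑ c : Fin n, η.1 x i *
        (η.1 c j * ip (W (wedge (stdVec n i) (stdVec n c))) (wedge (stdVec n x) (stdVec n j)))
      = ∑ a, ∑ c, η.1 a j * η.1 c i * R4 W i a c j := by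
    rw [Finset.sum_comm]
    apply Finset.sum_congr rfl; intro a _
    apply Finset.sum_congr rfl; intro c _
    unfold R4; ring
  have e3 : ∑ x : Fin n, ∑ c : Fin n, η.1 x j *
        (η.1 c i * ip (W (wedge (stdVec n c) (stdVec n j))) (wedge (stdVec n i) (stdVec n x)))
      = ∑ a, ∑ c, η.1 a i * η.1 c j * R4 W a j i c := by
    rw [Finset.sum_comm]
    apply Finset.sum_congr rfl; intro a _
    apply Finset.sum_congr rfl; intro c _
    unfold R4; ring
  have e4 : ∑ x : Fin n, ∑ c : Fin n, η.1 x j *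
        (η.1 c j * ip (W (wedge (stdVec n i) (stdVec n c))) (wedge (stdVec n i) (stdVec n x)))
      = ∑ a, ∑ c, η.1 a j * η.1 c j * R4 W i a i c := by
    rw [Finset.sum_comm]
    apply Finset.sum_congr rfl; intro a _
    apply Finset.sum_congr rfl; intro c _
    unfold R4; ring
  rw [e1, e2, e3, e4]
  ring
end Lemmas5b

section Lemmas5c
variable {n : ℕ}

lemma B_expand (W : sk n →ₗ[ℝ] sk n) (η : sk n) (i j : Fin n) :
    ip (br η (br η (W (wedge (stdVec n i) (stdVec n j))))) (wedge (stdVec n i) (stdVec n j))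
      = (∑ a, ∑ c, η.1 a i * η.1 c a * R4 W i j c j)
        + (∑ a, ∑ c, η.1 a i * η.1 c j * R4 W i j a c)
        + (∑ a, ∑ c, η.1 a j * η.1 c i * R4 W i j c a)
        + (∑ a, ∑ c, η.1 a j * η.1 c a * R4 W i j i c) := by
  rw [ip_br, ip_br, neg_neg]
  rw [br_wedge η i j, br_add, br_sum, br_sum]
  simp only [br_smul, br_wedge]
  simp only [ip_add_right, ip_sum_right, ip_smul_right, smul_add, mul_add,
    Finset.smul_sum, Finset.mul_sum, Finset.sum_add_distrib]
  unfold R4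
  ring_nf
end Lemmas5c
section Lemmas6
variable {n : ℕ}

/-- Contractions of the curvature with η⊗η. -/
def Mval (W : sk n →ₗ[ℝ] sk n) (η : sk n) : ℝ :=
  ∑ i, ∑ j, ∑ a, ∑ c, η.1 a i * η.1 c j * R4 W a j i c

def Nval (W : sk n →ₗ[ℝ] sk n) (η : sk n) : ℝ :=
  ∑ i, ∑ j, ∑ a, ∑ c, η.1 a i * η.1 c j * R4 W j i a c

def Qval (W : sk n →ₗ[ℝ] sk n) (η : sk n) : ℝ :=
  ∑ i, ∑ j, ∑ a, ∑ c, η.1 a i * η.1 c j * R4 W a i c j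

lemma Qval_eq (W : sk n →ₗ[ℝ] sk n) (η : sk n) : Qval W η = 4 * ip (W η) η := by
  rw [ipW_expand]
  unfold Qval
  rw [show (∑ a, ∑ i, ∑ c, ∑ j, η.1 a i * η.1 c j * R4 W a i c j)
      = ∑ i, ∑ a, ∑ c, ∑ j, η.1 a i * η.1 c j * R4 W a i c j from sum4_swap12 _]
  rw [show (∑ i, ∑ a, ∑ c, ∑ j, η.1 a i * η.1 c j * R4 W a i c j)
      = ∑ i, ∑ c, ∑ j, ∑ a, η.1 a i * η.1 c j * R4 W a i c j from
    Finset.sum_congr rfl fun i _ => sum3_rot _]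
  rw [show (∑ i, ∑ c, ∑ j, ∑ a, η.1 a i * η.1 c j * R4 W a i c j)
      = ∑ i, ∑ j, ∑ a, ∑ c, η.1 a i * η.1 c j * R4 W a i c j from
    Finset.sum_congr rfl fun i _ => sum3_rot _]
  ring

lemma bianchi_contraction {W : sk n →ₗ[ℝ] sk n} (hb : Bianchi W) (η : sk n) :
    Mval W η + Qval W η + Nval W η = 0 := by
  have key : ∑ i, ∑ j, ∑ a, ∑ c,
      (η.1 a i * η.1 c j * R4 W a j i c + η.1 a i * η.1 c j * R4 W i a j c
        + η.1 a i * η.1 c j * R4 W j i a c) = 0 := by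
    apply Finset.sum_eq_zero; intro i _
    apply Finset.sum_eq_zero; intro j _
    apply Finset.sum_eq_zero; intro a _
    apply Finset.sum_eq_zero; intro c _
    have hB := R4_bianchi hb a j i c
    linear_combination (η.1 a i * η.1 c j) * hB
  have hP : (∑ i, ∑ j, ∑ a, ∑ c, η.1 a i * η.1 c j * R4 W i a j c) = Qval W η := by
    unfold Qval
    apply Finset.sum_congr rfl; intro i _
    apply Finset.sum_congr rfl; intro j _
    apply Finset.sum_congr rfl; intro a _
    apply Finset.sum_congr rfl; intro c _
    rw [R4_flip1 W a i j c, R4_flip2 W a i j c]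
  simp only [Finset.sum_add_distrib] at key
  rw [hP] at key
  unfold Mval Nval
  linarith [key]

lemma sumA {W : sk n →ₗ[ℝ] sk n} (hsym : IsSym W) (hric : ∀ x y : Fin n → ℝ, ric W x y = 0)
    (η : sk n) :
    (∑ i, ∑ j, ip (br η (W (br η (wedge (stdVec n i) (stdVec n j)))))
        (wedge (stdVec n i) (stdVec n j)))
      = -2 * Mval W η := by
  simp only [A_expand, neg_add, Finset.sum_add_distrib, Finset.sum_neg_distrib]
  have h1 : (∑ i, ∑ j, ∑ a, ∑ c, η.1 a i * η.1 c i * R4 W a j c j) = 0 := by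
    rw [sum4_swap23, sum4_swap34]
    apply Finset.sum_eq_zero; intro i _
    apply Finset.sum_eq_zero; intro a _
    apply Finset.sum_eq_zero; intro c _
    rw [← Finset.mul_sum, R4_ric hric, mul_zero]
  have h2 : (∑ i, ∑ j, ∑ a, ∑ c, η.1 a i * η.1 c j * R4 W a j i c) = Mval W η := rfl
  have h3 : (∑ i, ∑ j, ∑ a, ∑ c, η.1 a j * η.1 c i * R4 W i a c j) = Mval W η := by
    unfold Mval
    rw [sum4_swap34]
    apply Finset.sum_congr rfl; intro i _
    apply Finset.sum_congr rfl; intro j _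
    apply Finset.sum_congr rfl; intro a _
    apply Finset.sum_congr rfl; intro c _
    rw [R4_sym hsym i c a j]
    ring
  have h4 : (∑ i, ∑ j, ∑ a, ∑ c, η.1 a j * η.1 c j * R4 W i a i c) = 0 := by
    rw [sum4_swap12, sum4_swap23, sum4_swap34]
    apply Finset.sum_eq_zero; intro i _
    apply Finset.sum_eq_zero; intro a _
    apply Finset.sum_eq_zero; intro c _
    have hflip : ∀ j, R4 W j a j c = R4 W a j c j := by
      intro j
      rw [R4_flip1 W a j j c, R4_flip2 W a j c j]
      ring_nf
    rw [show (∑ j, η.1 a i * η.1 c i * R4 W j a j c)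
        = ∑ j, η.1 a i * η.1 c i * R4 W a j c j from
      Finset.sum_congr rfl fun j _ => by rw [hflip j]]
    rw [← Finset.mul_sum, R4_ric hric, mul_zero]
  rw [h1, h2, h3, h4]
  unfold Mval
  ring

lemma sumB {W : sk n →ₗ[ℝ] sk n} (hsym : IsSym W) (hric : ∀ x y : Fin n → ℝ, ric W x y = 0)
    (η : sk n) :
    (∑ i, ∑ j, ip (br η (br η (W (wedge (stdVec n i) (stdVec n j)))))
        (wedge (stdVec n i) (stdVec n j)))
      = -2 * Nval W η := by
  simp only [B_expand, Finset.sum_add_distrib]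
  have h1 : (∑ i, ∑ j, ∑ a, ∑ c, η.1 a i * η.1 c a * R4 W i j c j) = 0 := by
    rw [sum4_swap23, sum4_swap34]
    apply Finset.sum_eq_zero; intro i _
    apply Finset.sum_eq_zero; intro a _
    apply Finset.sum_eq_zero; intro c _
    rw [← Finset.mul_sum, R4_ric hric, mul_zero]
  have h2 : (∑ i, ∑ j, ∑ a, ∑ c, η.1 a i * η.1 c j * R4 W i j a c) = - Nval W η := by
    unfold Nval
    rw [← Finset.sum_neg_distrib]
    apply Finset.sum_congr rfl; intro i _
    rw [← Finset.sum_neg_distrib]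
    apply Finset.sum_congr rfl; intro j _
    rw [← Finset.sum_neg_distrib]
    apply Finset.sum_congr rfl; intro a _
    rw [← Finset.sum_neg_distrib]
    apply Finset.sum_congr rfl; intro c _
    rw [R4_flip1 W j i a c]
    ring
  have h3 : (∑ i, ∑ j, ∑ a, ∑ c, η.1 a j * η.1 c i * R4 W i j c a) = - Nval W η := by
    unfold Nval
    rw [sum4_swap34, ← Finset.sum_neg_distrib]
    apply Finset.sum_congr rfl; intro i _
    rw [← Finset.sum_neg_distrib]
    apply Finset.sum_congr rfl; intro j _
    rw [← Finset.sum_neg_distrib]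
    apply Finset.sum_congr rfl; intro a _
    rw [← Finset.sum_neg_distrib]
    apply Finset.sum_congr rfl; intro c _
    rw [R4_flip1 W j i a c]
    ring
  have h4 : (∑ i, ∑ j, ∑ a, ∑ c, η.1 a j * η.1 c a * R4 W i j i c) = 0 := by
    rw [sum4_swap12, sum4_swap23, sum4_swap34]
    apply Finset.sum_eq_zero; intro i _
    apply Finset.sum_eq_zero; intro a _
    apply Finset.sum_eq_zero; intro c _
    have hflip : ∀ j, R4 W j i j c = R4 W i j c j := by
      intro j
      rw [R4_flip1 W i j j c, R4_flip2 W i j c j]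
      ring_nf
    rw [show (∑ j, η.1 a i * η.1 c a * R4 W j i j c)
        = ∑ j, η.1 a i * η.1 c a * R4 W i j c j from
      Finset.sum_congr rfl fun j _ => by rw [hflip j]]
    rw [← Finset.mul_sum, R4_ric hric, mul_zero]
  rw [h1, h2, h3, h4]
  ring

end Lemmas6
section Lemmas7
variable {n : ℕ}

lemma ite_split (P : Prop) [Decidable P] (w x z : ℝ) :
    (if P then (w + x + z) else 0)
      = (if P then w else 0) + (if P then x else 0) + (if P then z else 0) := by
  split_ifs <;> ring

lemma sharp_diff {W : sk n →ₗ[ℝ] sk n} (hsym : IsSym W) (hb : Bianchi W)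
    (hric : ∀ x y : Fin n → ℝ, ric W x y = 0) (η : sk n) :
    sharpForm (W + LinearMap.id) η - sharpForm W η - sharpForm LinearMap.id η
      = -2 * ip (W η) η := by
  unfold sharpForm
  have hpt : ∀ i j : Fin n,
      ip (br η ((W + LinearMap.id : sk n →ₗ[ℝ] sk n) (br η ((W + LinearMap.id : sk n →ₗ[ℝ] sk n)
            (wedge (stdVec n i) (stdVec n j))))))
          (wedge (stdVec n i) (stdVec n j))
        = ip (br η (W (br η (W (wedge (stdVec n i) (stdVec n j))))))
            (wedge (stdVec n i) (stdVec n j))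
          + (ip (br η (W (br η (wedge (stdVec n i) (stdVec n j)))))
              (wedge (stdVec n i) (stdVec n j))
            + ip (br η (br η (W (wedge (stdVec n i) (stdVec n j)))))
              (wedge (stdVec n i) (stdVec n j)))
          + ip (br η ((LinearMap.id : sk n →ₗ[ℝ] sk n) (br η ((LinearMap.id : sk n →ₗ[ℝ] sk n)
              (wedge (stdVec n i) (stdVec n j))))))
            (wedge (stdVec n i) (stdVec n j)) := by
    intro i j
    simp only [LinearMap.add_apply, LinearMap.id_coe, id_eq, br_add, map_add, ip_add_left]
    ring
  simp only [hpt, ite_split, Finset.sum_add_distrib]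
  have hhalf : (∑ i, ∑ j, if i < j then
        (ip (br η (W (br η (wedge (stdVec n i) (stdVec n j)))))
            (wedge (stdVec n i) (stdVec n j))
          + ip (br η (br η (W (wedge (stdVec n i) (stdVec n j)))))
            (wedge (stdVec n i) (stdVec n j))) else 0)
      = 2⁻¹ * ∑ i, ∑ j,
          (ip (br η (W (br η (wedge (stdVec n i) (stdVec n j)))))
              (wedge (stdVec n i) (stdVec n j))
            + ip (br η (br η (W (wedge (stdVec n i) (stdVec n j)))))
              (wedge (stdVec n i) (stdVec n j))) := by
    apply half_sum
    · intro i j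
      rw [wedge_swap (stdVec n i) (stdVec n j)]
      simp only [_root_.map_neg, br_neg, ip_neg_left, ip_neg_right, neg_neg]
    · intro i
      simp only [wedge_self, br_zero, _root_.map_zero, ip_zero_left]
      ring
  have hAB : (∑ i, ∑ j,
        (ip (br η (W (br η (wedge (stdVec n i) (stdVec n j)))))
            (wedge (stdVec n i) (stdVec n j))
          + ip (br η (br η (W (wedge (stdVec n i) (stdVec n j)))))
            (wedge (stdVec n i) (stdVec n j))))
      = -2 * Mval W η + -2 * Nval W η := by
    simp only [Finset.sum_add_distrib]
    rw [sumA hsym hric η, sumB hsym hric η]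
  have hbc := bianchi_contraction hb η
  have hq := Qval_eq W η
  rw [hhalf, hAB]
  linear_combination (1/2 : ℝ) * hbc - (1/2 : ℝ) * hq

end Lemmas7
/-- Let B(R₁,R₂) = (1/2)(Q(R₁+R₂) - Q(R₁) - Q(R₂)) be the polarization of
Q(R) = R² + R^#.  If W is a Weyl curvature operator (a symmetric endomorphism of Λ²ℝⁿ
satisfying the first Bianchi identity and having vanishing Ricci tensor), then
B(W, Id) = 0. -/
theorem stmt8 (n : ℕ) (W : sk n →ₗ[ℝ] sk n)
    (hWsym : IsSym W) (hWb : Bianchi W) (hWric : ∀ x y : Fin n → ℝ, ric W x y = 0)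
    (SW SI SWI : sk n →ₗ[ℝ] sk n)
    (hSW : IsSharp W SW) (hSI : IsSharp LinearMap.id SI)
    (hSWI : IsSharp (W + LinearMap.id) SWI) :
    ((1 : ℝ) / 2) • (((W + LinearMap.id) ∘ₗ (W + LinearMap.id) + SWI)
        - (W ∘ₗ W + SW) - (LinearMap.id ∘ₗ LinearMap.id + SI))
      = (0 : sk n →ₗ[ℝ] sk n) := by

  apply eq_zero_of_sym_quad
  · exact isSym_smul _ (isSym_sub (isSym_sub
      (isSym_add (isSym_compSelf (isSym_add hWsym isSym_id)) hSWI.1)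
      (isSym_add (isSym_compSelf hWsym) hSW.1))
      (isSym_add (isSym_compSelf isSym_id) hSI.1))
  · intro η
    have hs := sharp_diff hWsym hWb hWric η
    simp only [LinearMap.smul_apply, LinearMap.sub_apply, LinearMap.add_apply,
      LinearMap.comp_apply, LinearMap.id_coe, id_eq, map_add, smul_eq_mul]
    simp only [ip_smul_left, ip_sub_left, ip_add_left]
    rw [hSW.2 η, hSI.2 η, hSWI.2 η]
    linear_combination (1/2 : ℝ) * hs
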